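/- For a sequence of L² functions e^0, …, e^N, the discrete L1 fractional derivative tested against e^n satisfies (D_τ^α e^n, e^n) ≥ (1/2) D_τ^α ‖e^n‖²_{L²}, where D_τ^α e^n = (τ^{-α}/Γ(2-α)) Σ_{j=1}^n a_{n-j}(e^j - e^{j-1}). -/

import Mathlib

open Real Finset

private lemma key_sum (a g : ℕ → ℝ) (ha1 : ∀ i, a (i + 1) ≤ a i) (ha0 : ∀ i, 0 ≤ a i)
    (hg : ∀ j, 0 ≤ g j) (n : ℕ) (hn : 1 ≤ n) (hgn : g n = 0) :
    0 ≤ ∑ j ∈ Finset.Icc 1 n, a (n - j) * (g (j - 1) - g j) := by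
  have hIcc : (Finset.Icc 1 n) = Finset.Ico 1 (n + 1) := by
    ext x; simp [Nat.lt_succ_iff]
  rw [hIcc, Finset.sum_Ico_eq_sum_range]
  simp only [Nat.add_sub_cancel, Nat.add_sub_cancel_left]
  have hre : ∀ i ∈ Finset.range n, a (n - (1 + i)) * (g i - g (1 + i))
      = a (n - 1 - i) * g i - a (n - 1 - i) * g (i + 1) := by
    intro i hi
    have e1 : n - (1 + i) = n - 1 - i := by omega
    have e3 : 1 + i = i + 1 := by omega
    rw [e1, e3]; ring
  rw [Finset.sum_congr rfl hre, Finset.sum_sub_distrib]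
  obtain ⟨m, rfl⟩ : ∃ m, n = m + 1 := ⟨n - 1, by omega⟩
  rw [Finset.sum_range_succ' (fun i => a (m + 1 - 1 - i) * g i) m,
      Finset.sum_range_succ (fun i => a (m + 1 - 1 - i) * g (i + 1)) m]
  simp only [Nat.add_sub_cancel, Nat.sub_self, Nat.sub_zero]
  rw [hgn]
  have hmain : ∑ i ∈ Finset.range m, a (m - i) * g (i + 1)
      ≤ ∑ i ∈ Finset.range m, a (m - (i + 1)) * g (i + 1) := by
    apply Finset.sum_le_sum
    intro i hi
    simp only [Finset.mem_range] at hi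
    have h1 : m - (i + 1) + 1 = m - i := by omega
    have h2 := ha1 (m - (i + 1))
    rw [h1] at h2
    exact mul_le_mul_of_nonneg_right h2 (hg _)
  have h0 : 0 ≤ a m * g 0 := mul_nonneg (ha0 _) (hg _)
  nlinarith [hmain, h0]

theorem stmt_11 (α : ℝ) (hα0 : 0 < α) (hα1 : α < 1)
    (τ : ℝ) (hτ : 0 < τ)
    (a : ℕ → ℝ) (ha : ∀ i : ℕ, a i = ((i : ℝ) + 1) ^ (1 - α) - (i : ℝ) ^ (1 - α))
    (H : Type*) [NormedAddCommGroup H] [InnerProductSpace ℝ H]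
    (N : ℕ) (e : ℕ → H) :
    ∀ n : ℕ, 1 ≤ n → n ≤ N →
      inner ℝ ((τ ^ (-α) / Real.Gamma (2 - α)) •
          ∑ j ∈ Finset.Icc 1 n, a (n - j) • (e j - e (j - 1))) (e n)
        ≥ (1 / 2 : ℝ) * ((τ ^ (-α) / Real.Gamma (2 - α)) *
            ∑ j ∈ Finset.Icc 1 n, a (n - j) * (‖e j‖ ^ 2 - ‖e (j - 1)‖ ^ 2)) := by
  intro n hn _
  have hp0 : (0:ℝ) < 1 - α := by linarith
  set c : ℝ := τ ^ (-α) / Real.Gamma (2 - α) with hc_def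
  have hc : 0 ≤ c :=
    div_nonneg (Real.rpow_nonneg hτ.le _) (Real.Gamma_pos_of_pos (by linarith)).le
  have ha0 : ∀ i, 0 ≤ a i := by
    intro i
    rw [ha]
    have h := Real.rpow_le_rpow (Nat.cast_nonneg i) (by linarith : (i:ℝ) ≤ (i:ℝ) + 1) hp0.le
    linarith
  have ha1 : ∀ i, a (i + 1) ≤ a i := by
    intro i
    have hconc := Real.concaveOn_rpow hp0.le (by linarith : 1 - α ≤ 1)
    have h := hconc.2 (Set.mem_Ici.2 (Nat.cast_nonneg i))
      (Set.mem_Ici.2 (by positivity : (0:ℝ) ≤ (i:ℝ) + 2))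
      (by norm_num : (0:ℝ) ≤ 1/2) (by norm_num : (0:ℝ) ≤ 1/2) (by norm_num)
    simp only [smul_eq_mul] at h
    have hmid : (1/2 : ℝ) * (i:ℝ) + (1/2 : ℝ) * ((i:ℝ) + 2) = (i:ℝ) + 1 := by ring
    rw [hmid] at h
    rw [ha, ha]
    push_cast
    have h2 : ((i:ℝ) + 1 + 1) = ((i:ℝ) + 2) := by ring
    rw [h2]
    linarith
  set g : ℕ → ℝ := fun j => ‖e j - e n‖ ^ 2 with hg_def
  have hg : ∀ j, 0 ≤ g j := fun j => by positivity
  have hgn : g n = 0 := by simp [hg_def]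
  have hkey := key_sum a g ha1 ha0 hg n hn hgn
  have hX : (inner ℝ (∑ j ∈ Finset.Icc 1 n, a (n - j) • (e j - e (j - 1))) (e n) : ℝ)
      = ∑ j ∈ Finset.Icc 1 n,
          a (n - j) * ((inner ℝ (e j) (e n) : ℝ) - (inner ℝ (e (j - 1)) (e n) : ℝ)) := by
    rw [sum_inner]
    refine Finset.sum_congr rfl fun j _ => ?_
    rw [real_inner_smul_left, inner_sub_left]
  have hid : ∑ j ∈ Finset.Icc 1 n,
        a (n - j) * ((inner ℝ (e j) (e n) : ℝ) - (inner ℝ (e (j - 1)) (e n) : ℝ))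
      - (1/2 : ℝ) * ∑ j ∈ Finset.Icc 1 n, a (n - j) * (‖e j‖ ^ 2 - ‖e (j - 1)‖ ^ 2)
      = (1/2 : ℝ) * ∑ j ∈ Finset.Icc 1 n, a (n - j) * (g (j - 1) - g j) := by
    rw [Finset.mul_sum, Finset.mul_sum, ← Finset.sum_sub_distrib]
    refine Finset.sum_congr rfl fun j _ => ?_
    have h1 : g j = ‖e j‖ ^ 2 - 2 * (inner ℝ (e j) (e n) : ℝ) + ‖e n‖ ^ 2 := by
      simp only [hg_def]
      rw [norm_sub_sq_real]
    have h2 : g (j - 1) = ‖e (j - 1)‖ ^ 2 - 2 * (inner ℝ (e (j - 1)) (e n) : ℝ) + ‖e n‖ ^ 2 := by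
      simp only [hg_def]
      rw [norm_sub_sq_real]
    rw [h1, h2]; ring
  rw [ge_iff_le, real_inner_smul_left, hX]
  set X := ∑ j ∈ Finset.Icc 1 n,
      a (n - j) * ((inner ℝ (e j) (e n) : ℝ) - (inner ℝ (e (j - 1)) (e n) : ℝ)) with hXdef
  set Y := ∑ j ∈ Finset.Icc 1 n, a (n - j) * (‖e j‖ ^ 2 - ‖e (j - 1)‖ ^ 2) with hYdef
  have hXY : (1/2 : ℝ) * Y ≤ X := by linarith
  nlinarith [mul_le_mul_of_nonneg_left hXY hc]
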